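/- arXiv:1011.2034 — 3 statements merged into one kernel-verified Lean document; each statement's English description precedes it below -/
import Mathlib

section
/- Let h₁ : ℝ^{K+1} → ℝ, h₂ : ℝ^{K+1} → ℝ^K, and g : ℝ → ℝ^K be Lipschitz continuous functions with Lipschitz constant c. For each pair of continuous functions (y₁, y₂) : [0,T] → ℝ × ℝ^K, there exists a unique pair of continuous functions (x₁, x₂) : [0,T] → ℝ × ℝ^K satisfying x₁(t) = y₁(t) + ∫₀ᵗ h₁(x(s)) ds and x₂(t) = y₂(t) + ∫₀ᵗ h₂(x(s)) ds + g(x₁(t)) for all t ∈ [0,T], where x(s) = (x₁(s), x₂(s)). -/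
open Set MeasureTheory

noncomputable def volterraMap {F : Type*} [NormedAddCommGroup F] [NormedSpace ℝ F] [CompleteSpace F]
    {T : ℝ} (hT : (0:ℝ) ≤ T) (H : F → F) (hH : Continuous H)
    (y : C(Icc 0 T, F)) (x : C(Icc 0 T, F)) : C(Icc 0 T, F) :=
  ⟨fun t => y t + ∫ s in (0:ℝ)..(t:ℝ), H (x (projIcc 0 T hT s)), by
    refine y.continuous.add ?_
    have hc : Continuous fun s : ℝ => H (x (projIcc 0 T hT s)) :=
      hH.comp (x.continuous.comp continuous_projIcc)
    exact (intervalIntegral.continuous_primitive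
      (fun a b => hc.intervalIntegrable a b) 0).comp continuous_subtype_val⟩

theorem volterraMap_apply {F : Type*} [NormedAddCommGroup F] [NormedSpace ℝ F] [CompleteSpace F]
    {T : ℝ} (hT : (0:ℝ) ≤ T) (H : F → F) (hH : Continuous H)
    (y : C(Icc 0 T, F)) (x : C(Icc 0 T, F)) (t : Icc 0 T) :
    volterraMap hT H hH y x t = y t + ∫ s in (0:ℝ)..(t:ℝ), H (x (projIcc 0 T hT s)) := rfl

theorem volterra_iter_dist {F : Type*} [NormedAddCommGroup F] [NormedSpace ℝ F] [CompleteSpace F]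
    {T : ℝ} (hT : (0:ℝ) ≤ T) {L : NNReal} {H : F → F} (hH : LipschitzWith L H)
    (y z w : C(Icc 0 T, F)) (n : ℕ) (t : Icc 0 T) :
    dist (((volterraMap hT H hH.continuous y)^[n] z) t)
         (((volterraMap hT H hH.continuous y)^[n] w) t)
      ≤ ((L : ℝ) * t) ^ n / n.factorial * dist z w := by
  induction n generalizing t with
  | zero => simpa using ContinuousMap.dist_apply_le_dist t
  | succ n ih =>
    set Φ := volterraMap hT H hH.continuous y
    set u := Φ^[n] z with hu
    set v := Φ^[n] w with hv
    have ht0 : (0:ℝ) ≤ (t:ℝ) := t.2.1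
    have hcu : Continuous fun s : ℝ => H (u (projIcc 0 T hT s)) :=
      hH.continuous.comp (u.continuous.comp continuous_projIcc)
    have hcv : Continuous fun s : ℝ => H (v (projIcc 0 T hT s)) :=
      hH.continuous.comp (v.continuous.comp continuous_projIcc)
    rw [Function.iterate_succ_apply', Function.iterate_succ_apply', ← hu, ← hv]
    rw [dist_eq_norm, volterraMap_apply, volterraMap_apply]
    have heq : (y t + ∫ s in (0:ℝ)..(t:ℝ), H (u (projIcc 0 T hT s)))
        - (y t + ∫ s in (0:ℝ)..(t:ℝ), H (v (projIcc 0 T hT s)))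
        = ∫ s in (0:ℝ)..(t:ℝ), (H (u (projIcc 0 T hT s)) - H (v (projIcc 0 T hT s))) := by
      rw [intervalIntegral.integral_sub (hcu.intervalIntegrable _ _) (hcv.intervalIntegrable _ _)]
      abel
    rw [heq]
    have h1 : ‖∫ s in (0:ℝ)..(t:ℝ), (H (u (projIcc 0 T hT s)) - H (v (projIcc 0 T hT s)))‖
        ≤ ∫ s in (0:ℝ)..(t:ℝ), ‖H (u (projIcc 0 T hT s)) - H (v (projIcc 0 T hT s))‖ :=
      intervalIntegral.norm_integral_le_integral_norm ht0
    have h2 : ∫ s in (0:ℝ)..(t:ℝ), ‖H (u (projIcc 0 T hT s)) - H (v (projIcc 0 T hT s))‖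
        ≤ ∫ s in (0:ℝ)..(t:ℝ), (L:ℝ) * (((L:ℝ) * s) ^ n / n.factorial * dist z w) := by
      refine intervalIntegral.integral_mono_on ht0 ((hcu.sub hcv).norm.intervalIntegrable _ _)
        (Continuous.intervalIntegrable (by continuity) _ _) ?_
      intro s hs
      have hsmem : s ∈ Icc (0:ℝ) T := ⟨hs.1, hs.2.trans t.2.2⟩
      have hproj : ((projIcc 0 T hT s : Icc 0 T) : ℝ) = s := by
        rw [projIcc_of_mem hT hsmem]
      calc ‖H (u (projIcc 0 T hT s)) - H (v (projIcc 0 T hT s))‖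
          = dist (H (u (projIcc 0 T hT s))) (H (v (projIcc 0 T hT s))) := (dist_eq_norm _ _).symm
        _ ≤ (L:ℝ) * dist (u (projIcc 0 T hT s)) (v (projIcc 0 T hT s)) := hH.dist_le_mul _ _
        _ ≤ (L:ℝ) * (((L:ℝ) * s) ^ n / n.factorial * dist z w) := by
            have := ih (projIcc 0 T hT s)
            rw [hproj] at this
            exact mul_le_mul_of_nonneg_left this L.2
    have h3 : (∫ s in (0:ℝ)..(t:ℝ), (L:ℝ) * (((L:ℝ) * s) ^ n / n.factorial * dist z w))
        = ((L:ℝ) * t) ^ (n+1) / (n+1).factorial * dist z w := by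
      have : ∀ s : ℝ, (L:ℝ) * (((L:ℝ) * s) ^ n / n.factorial * dist z w)
          = ((L:ℝ)^(n+1) / n.factorial * dist z w) * s ^ n := by
        intro s; rw [mul_pow]; ring
      simp_rw [this]
      rw [intervalIntegral.integral_const_mul, integral_pow]
      have hfac : ((n:ℝ)+1) ≠ 0 := by positivity
      have hfac2 : ((n.factorial : ℝ)) ≠ 0 := by positivity
      rw [Nat.factorial_succ, mul_pow]
      push_cast
      field_simp
      ring
    calc ‖_‖ ≤ _ := h1
      _ ≤ _ := h2
      _ = _ := h3
open Set MeasureTheory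
section
variable {F : Type*} [NormedAddCommGroup F] [NormedSpace ℝ F] [CompleteSpace F]

theorem volterra_existsUnique {T : ℝ} (hT : (0:ℝ) ≤ T) {L : NNReal} {H : F → F}
    (hH : LipschitzWith L H) (y : C(Icc 0 T, F))
    (hiter : ∀ (z w : C(Icc 0 T, F)) (n : ℕ) (t : Icc 0 T),
      dist (((volterraMap hT H hH.continuous y)^[n] z) t)
           (((volterraMap hT H hH.continuous y)^[n] w) t)
        ≤ ((L : ℝ) * t) ^ n / n.factorial * dist z w) :
    ∃! x : C(Icc 0 T, F), volterraMap hT H hH.continuous y x = x := by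
  set Φ := volterraMap hT H hH.continuous y with hΦ
  obtain ⟨n, hn⟩ : ∃ n : ℕ, ((L:ℝ) * T) ^ n / n.factorial < 1 :=
    ((FloorSemiring.tendsto_pow_div_factorial_atTop ((L:ℝ) * T)).eventually_lt_const
      one_pos).exists
  have hC0 : (0:ℝ) ≤ ((L:ℝ) * T) ^ n / n.factorial := by positivity
  have hb : ∀ z w : C(Icc 0 T, F),
      dist (Φ^[n] z) (Φ^[n] w) ≤ (((L:ℝ) * T) ^ n / n.factorial) * dist z w := by
    intro z w
    rw [ContinuousMap.dist_le (by positivity)]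
    intro t
    refine (hiter z w n t).trans ?_
    have hp : ((L:ℝ) * t) ^ n ≤ ((L:ℝ) * T) ^ n :=
      pow_le_pow_left₀ (mul_nonneg L.2 t.2.1)
        (mul_le_mul_of_nonneg_left t.2.2 L.2) n
    have : ((L:ℝ) * t) ^ n / n.factorial ≤ ((L:ℝ) * T) ^ n / n.factorial := by
      apply div_le_div_of_nonneg_right hp; positivity
    exact mul_le_mul_of_nonneg_right this dist_nonneg
  set K' : NNReal := ⟨((L:ℝ) * T) ^ n / n.factorial, hC0⟩ with hK'
  have hcontr : ContractingWith K' (Φ^[n]) :=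
    ⟨by exact_mod_cast hn, LipschitzWith.of_dist_le_mul hb⟩
  have hne : Nonempty C(Icc 0 T, F) := ⟨ContinuousMap.const _ 0⟩
  set x₀ := hcontr.fixedPoint (Φ^[n]) with hx₀
  have hfix : Function.IsFixedPt (Φ^[n]) x₀ := hcontr.fixedPoint_isFixedPt
  have hfix2 : Function.IsFixedPt (Φ^[n]) (Φ x₀) := by
    show Φ^[n] (Φ x₀) = Φ x₀
    rw [← Function.iterate_succ_apply, Function.iterate_succ_apply', hfix]
  have hmain : Φ x₀ = x₀ := by
    rw [hcontr.fixedPoint_unique hfix2, ← hcontr.fixedPoint_unique hfix]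
  refine ⟨x₀, hmain, ?_⟩
  intro w hw
  have : Function.IsFixedPt (Φ^[n]) w := (Function.IsFixedPt.iterate hw n)
  exact hcontr.fixedPoint_unique this
end

/-- existence and uniqueness of continuous solutions of the integral
equations `x₁(t) = y₁(t) + ∫₀ᵗ h₁(x(s)) ds` and
`x₂(t) = y₂(t) + ∫₀ᵗ h₂(x(s)) ds + g(x₁(t))` on `[0, T]`, for Lipschitz `h₁, h₂, g`. -/
theorem exists_unique_solution {K : ℕ} (hK : 1 ≤ K) (T : ℝ) (hT : 0 < T) (c : NNReal)
    (h₁ : ℝ × (Fin K → ℝ) → ℝ) (h₂ : ℝ × (Fin K → ℝ) → Fin K → ℝ) (g : ℝ → Fin K → ℝ)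
    (hh₁ : LipschitzWith c h₁) (hh₂ : LipschitzWith c h₂) (hg : LipschitzWith c g)
    (y₁ : ℝ → ℝ) (y₂ : ℝ → Fin K → ℝ)
    (hy₁ : ContinuousOn y₁ (Icc 0 T)) (hy₂ : ContinuousOn y₂ (Icc 0 T)) :
    ∃ x₁ : ℝ → ℝ, ∃ x₂ : ℝ → Fin K → ℝ,
      ContinuousOn x₁ (Icc 0 T) ∧ ContinuousOn x₂ (Icc 0 T) ∧
      (∀ t ∈ Icc (0:ℝ) T, x₁ t = y₁ t + ∫ s in (0:ℝ)..t, h₁ (x₁ s, x₂ s)) ∧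
      (∀ t ∈ Icc (0:ℝ) T, x₂ t = y₂ t + (∫ s in (0:ℝ)..t, h₂ (x₁ s, x₂ s)) + g (x₁ t)) ∧
      (∀ x₁' : ℝ → ℝ, ∀ x₂' : ℝ → Fin K → ℝ,
        ContinuousOn x₁' (Icc 0 T) → ContinuousOn x₂' (Icc 0 T) →
        (∀ t ∈ Icc (0:ℝ) T, x₁' t = y₁ t + ∫ s in (0:ℝ)..t, h₁ (x₁' s, x₂' s)) →
        (∀ t ∈ Icc (0:ℝ) T, x₂' t = y₂ t + (∫ s in (0:ℝ)..t, h₂ (x₁' s, x₂' s)) + g (x₁' t)) →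
        ∀ t ∈ Icc (0:ℝ) T, x₁' t = x₁ t ∧ x₂' t = x₂ t) := by
  -- the transformed vector field
  set H : ℝ × (Fin K → ℝ) → ℝ × (Fin K → ℝ) :=
    fun p => (h₁ (p.1, p.2 + g p.1), h₂ (p.1, p.2 + g p.1)) with hHdef
  have hg' : LipschitzWith c (fun p : ℝ × (Fin K → ℝ) => g p.1) := by
    simpa [Function.comp_def] using hg.comp (LipschitzWith.prod_fst (α := ℝ) (β := Fin K → ℝ))
  have hm : LipschitzWith (1 ⊔ (1 + c)) (fun p : ℝ × (Fin K → ℝ) => (p.1, p.2 + g p.1)) :=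
    LipschitzWith.prodMk LipschitzWith.prod_fst (LipschitzWith.prod_snd.add hg')
  have hH : LipschitzWith ((c ⊔ c) * (1 ⊔ (1 + c))) H := (hh₁.prodMk hh₂).comp hm
  set y : C(Icc 0 T, ℝ × (Fin K → ℝ)) :=
    ⟨(Icc 0 T).restrict (fun t => (y₁ t, y₂ t)), (hy₁.prodMk hy₂).restrict⟩ with hydef
  obtain ⟨z, hz, huniq⟩ := volterra_existsUnique hT.le hH y (volterra_iter_dist hT.le hH y)
  set P : ℝ → Icc (0:ℝ) T := projIcc 0 T hT.le with hPdef
  have hz' : ∀ t : Icc (0:ℝ) T, z t = y t + ∫ s in (0:ℝ)..(t:ℝ), H (z (P s)) :=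
    fun t => (ContinuousMap.congr_fun hz t).symm
  set x₁ : ℝ → ℝ := fun t => (z (P t)).1 with hx₁def
  set x₂ : ℝ → Fin K → ℝ := fun t => (z (P t)).2 + g ((z (P t)).1) with hx₂def
  have hzc : Continuous fun t : ℝ => z (P t) := z.continuous.comp continuous_projIcc
  have hx₁c : Continuous x₁ := continuous_fst.comp hzc
  have hx₂c : Continuous x₂ :=
    (continuous_snd.comp hzc).add (hg.continuous.comp (continuous_fst.comp hzc))
  have hHc : Continuous fun s : ℝ => H (z (P s)) := hH.continuous.comp hzc
  have hint : ∀ t : ℝ, IntervalIntegrable (fun s => H (z (P s))) MeasureTheory.volume 0 t :=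
    fun t => hHc.intervalIntegrable 0 t
  have hI1 : ∀ t : ℝ, (∫ s in (0:ℝ)..t, H (z (P s))).1 = ∫ s in (0:ℝ)..t, h₁ (x₁ s, x₂ s) := by
    intro t
    exact ((ContinuousLinearMap.fst ℝ ℝ (Fin K → ℝ)).intervalIntegral_comp_comm (hint t)).symm
  have hI2 : ∀ t : ℝ, (∫ s in (0:ℝ)..t, H (z (P s))).2 = ∫ s in (0:ℝ)..t, h₂ (x₁ s, x₂ s) := by
    intro t
    exact ((ContinuousLinearMap.snd ℝ ℝ (Fin K → ℝ)).intervalIntegral_comp_comm (hint t)).symm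
  refine ⟨x₁, x₂, hx₁c.continuousOn, hx₂c.continuousOn, ?_, ?_, ?_⟩
  · intro t ht
    show (z (P t)).1 = y₁ t + _
    rw [hPdef, projIcc_of_mem hT.le ht, hz' ⟨t, ht⟩, Prod.fst_add, hI1]
    rfl
  · intro t ht
    show (z (P t)).2 + g ((z (P t)).1) = _
    show (z (P t)).2 + g ((z (P t)).1) = y₂ t + (∫ s in (0:ℝ)..t, h₂ (x₁ s, x₂ s)) + g ((z (P t)).1)
    congr 1
    rw [hPdef, projIcc_of_mem hT.le ht, hz' ⟨t, ht⟩, Prod.snd_add, hI2]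
    rfl
  · intro x₁' x₂' hc1 hc2 he1 he2
    set w : C(Icc (0:ℝ) T, ℝ × (Fin K → ℝ)) :=
      ⟨(Icc 0 T).restrict (fun t => (x₁' t, x₂' t - g (x₁' t))),
        (hc1.prodMk (hc2.sub (hg.continuous.comp_continuousOn hc1))).restrict⟩ with hwdef
    have hwfix : volterraMap hT.le H hH.continuous y w = w := by
      refine ContinuousMap.ext fun t => ?_
      obtain ⟨t, ht⟩ := t
      have key : Set.EqOn (fun s => H (w (P s)))
          (fun s => (h₁ (x₁' s, x₂' s), h₂ (x₁' s, x₂' s))) (uIcc 0 t) := by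
        intro s hs
        rw [uIcc_of_le ht.1] at hs
        have hs' : s ∈ Icc (0:ℝ) T := ⟨hs.1, hs.2.trans ht.2⟩
        simp only
        rw [hPdef, projIcc_of_mem hT.le hs']
        show (h₁ (x₁' s, x₂' s - g (x₁' s) + g (x₁' s)),
              h₂ (x₁' s, x₂' s - g (x₁' s) + g (x₁' s))) = _
        rw [sub_add_cancel]
      have hintw : IntervalIntegrable (fun s => (h₁ (x₁' s, x₂' s), h₂ (x₁' s, x₂' s)))
          MeasureTheory.volume 0 t := by
        apply ContinuousOn.intervalIntegrable
        have hsub : uIcc (0:ℝ) t ⊆ Icc 0 T := by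
          rw [uIcc_of_le ht.1]; exact Icc_subset_Icc le_rfl ht.2
        exact (((hh₁.continuous.comp_continuousOn (hc1.prodMk hc2)).prodMk
          (hh₂.continuous.comp_continuousOn (hc1.prodMk hc2)))).mono hsub
      rw [volterraMap_apply, intervalIntegral.integral_congr key]
      refine Prod.ext ?_ ?_
      · show (y ⟨t, ht⟩).1 + (∫ s in (0:ℝ)..t,
            (h₁ (x₁' s, x₂' s), h₂ (x₁' s, x₂' s))).1 = x₁' t
        have hcm := (ContinuousLinearMap.fst ℝ ℝ (Fin K → ℝ)).intervalIntegral_comp_comm hintw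
        have h1' : (∫ s in (0:ℝ)..t, (h₁ (x₁' s, x₂' s), h₂ (x₁' s, x₂' s))).1
            = ∫ s in (0:ℝ)..t, h₁ (x₁' s, x₂' s) := hcm.symm
        rw [h1']
        exact (he1 t ht).symm
      · show (y ⟨t, ht⟩).2 + (∫ s in (0:ℝ)..t,
            (h₁ (x₁' s, x₂' s), h₂ (x₁' s, x₂' s))).2 = x₂' t - g (x₁' t)
        have hcm := (ContinuousLinearMap.snd ℝ ℝ (Fin K → ℝ)).intervalIntegral_comp_comm hintw
        have h2' : (∫ s in (0:ℝ)..t, (h₁ (x₁' s, x₂' s), h₂ (x₁' s, x₂' s))).2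
            = ∫ s in (0:ℝ)..t, h₂ (x₁' s, x₂' s) := hcm.symm
        rw [h2', he2 t ht]
        show y₂ t + _ = y₂ t + _ + g (x₁' t) - g (x₁' t)
        rw [add_sub_cancel_right]
    have hw : w = z := huniq w hwfix
    intro t ht
    have h1 : (x₁' t, x₂' t - g (x₁' t)) = z ⟨t, ht⟩ := by
      rw [← hw]; rfl
    have e1 : x₁' t = x₁ t := by
      rw [hx₁def]
      show x₁' t = (z (P t)).1
      rw [hPdef, projIcc_of_mem hT.le ht, ← h1]
    refine ⟨e1, ?_⟩
    rw [hx₂def]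
    show x₂' t = (z (P t)).2 + g ((z (P t)).1)
    rw [hPdef, projIcc_of_mem hT.le ht, ← h1]
    show x₂' t = x₂' t - g (x₁' t) + g (x₁' t)
    rw [sub_add_cancel]
end

section
/- Let h₁, h₂, g be Lipschitz continuous with constant c, and let Υ(y) denote the unique solution x to x₁(t) = y₁(t) + ∫₀ᵗ h₁(x(s)) ds, x₂(t) = y₂(t) + ∫₀ᵗ h₂(x(s)) ds + g(x₁(t)) on [0,T] for continuous input y. Then Υ is Lipschitz continuous with respect to the supremum norm: for all continuous y, ỹ on [0,T], sup_{0≤t≤T} |Υ(y)(t) − Υ(ỹ)(t)| ≤ (1+c)·exp((c+c²)T)·sup_{0≤t≤T} |y(t) − ỹ(t)|. -/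
open Set

/-- the solution map `Υ` of the integral equations is Lipschitz in the
supremum norm with constant `(1 + c) · exp((c + c²) T)`. -/
theorem solution_map_lipschitz {K : ℕ} (hK : 1 ≤ K) (T : ℝ) (hT : 0 < T) (c : NNReal)
    (h₁ : ℝ × (Fin K → ℝ) → ℝ) (h₂ : ℝ × (Fin K → ℝ) → Fin K → ℝ) (g : ℝ → Fin K → ℝ)
    (hh₁ : LipschitzWith c h₁) (hh₂ : LipschitzWith c h₂) (hg : LipschitzWith c g)
    (y₁ ty₁ x₁ tx₁ : ℝ → ℝ) (y₂ ty₂ x₂ tx₂ : ℝ → Fin K → ℝ)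
    (hy₁ : ContinuousOn y₁ (Icc 0 T)) (hy₂ : ContinuousOn y₂ (Icc 0 T))
    (hty₁ : ContinuousOn ty₁ (Icc 0 T)) (hty₂ : ContinuousOn ty₂ (Icc 0 T))
    (hx₁ : ContinuousOn x₁ (Icc 0 T)) (hx₂ : ContinuousOn x₂ (Icc 0 T))
    (htx₁ : ContinuousOn tx₁ (Icc 0 T)) (htx₂ : ContinuousOn tx₂ (Icc 0 T))
    (hsol₁ : ∀ t ∈ Icc (0:ℝ) T, x₁ t = y₁ t + ∫ s in (0:ℝ)..t, h₁ (x₁ s, x₂ s))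
    (hsol₂ : ∀ t ∈ Icc (0:ℝ) T, x₂ t = y₂ t + (∫ s in (0:ℝ)..t, h₂ (x₁ s, x₂ s)) + g (x₁ t))
    (htsol₁ : ∀ t ∈ Icc (0:ℝ) T, tx₁ t = ty₁ t + ∫ s in (0:ℝ)..t, h₁ (tx₁ s, tx₂ s))
    (htsol₂ : ∀ t ∈ Icc (0:ℝ) T,
      tx₂ t = ty₂ t + (∫ s in (0:ℝ)..t, h₂ (tx₁ s, tx₂ s)) + g (tx₁ t))
    (M : ℝ) (hM : ∀ t ∈ Icc (0:ℝ) T, max |y₁ t - ty₁ t| ‖y₂ t - ty₂ t‖ ≤ M) :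
    ∀ t ∈ Icc (0:ℝ) T,
      max |x₁ t - tx₁ t| ‖x₂ t - tx₂ t‖
        ≤ (1 + (c : ℝ)) * Real.exp (((c : ℝ) + (c : ℝ) ^ 2) * T) * M := by
  have hc0 : (0:ℝ) ≤ (c:ℝ) := c.coe_nonneg
  have hM0 : (0:ℝ) ≤ M :=
    le_trans (le_trans (abs_nonneg _) (le_max_left _ _)) (hM 0 ⟨le_refl _, hT.le⟩)
  -- projection onto [0, T]
  set π : ℝ → ℝ := fun s => (projIcc (0:ℝ) T hT.le s : ℝ) with hπdef
  have hπc : Continuous π := continuous_subtype_val.comp (continuous_projIcc)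
  have hπmem : ∀ s, π s ∈ Icc (0:ℝ) T := fun s => (projIcc (0:ℝ) T hT.le s).2
  have hπeq : ∀ s ∈ Icc (0:ℝ) T, π s = s := fun s hs => by
    simp only [hπdef, projIcc_of_mem hT.le hs]
  -- the comparison function
  set v : ℝ → ℝ := fun s => max |x₁ (π s) - tx₁ (π s)| ‖x₂ (π s) - tx₂ (π s)‖ with hvdef
  have hv0 : ∀ s, 0 ≤ v s := fun s => le_trans (abs_nonneg _) (le_max_left _ _)
  have hvc : Continuous v := by
    have h1 : Continuous fun s => x₁ (π s) - tx₁ (π s) :=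
      (hx₁.comp_continuous hπc hπmem).sub (htx₁.comp_continuous hπc hπmem)
    have h2 : Continuous fun s => x₂ (π s) - tx₂ (π s) :=
      (hx₂.comp_continuous hπc hπmem).sub (htx₂.comp_continuous hπc hπmem)
    exact (h1.abs).max (h2.norm)
  have hvint : ∀ a b : ℝ, IntervalIntegrable v MeasureTheory.volume a b :=
    fun a b => hvc.intervalIntegrable a b
  -- pointwise Lipschitz bounds on the integrands/terms, over [0,T]
  have hb₁ : ∀ s ∈ Icc (0:ℝ) T, |h₁ (x₁ s, x₂ s) - h₁ (tx₁ s, tx₂ s)| ≤ (c:ℝ) * v s := by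
    intro s hs
    have := hh₁.dist_le_mul (x₁ s, x₂ s) (tx₁ s, tx₂ s)
    rw [Real.dist_eq] at this
    refine this.trans ?_
    gcongr
    rw [Prod.dist_eq, hvdef]
    simp only [hπeq s hs]
    exact max_le_max (le_of_eq (Real.dist_eq _ _)) (le_of_eq (dist_eq_norm _ _))
  have hb₂ : ∀ s ∈ Icc (0:ℝ) T, ‖h₂ (x₁ s, x₂ s) - h₂ (tx₁ s, tx₂ s)‖ ≤ (c:ℝ) * v s := by
    intro s hs
    have := hh₂.dist_le_mul (x₁ s, x₂ s) (tx₁ s, tx₂ s)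
    rw [dist_eq_norm] at this
    refine this.trans ?_
    gcongr
    rw [Prod.dist_eq, hvdef]
    simp only [hπeq s hs]
    exact max_le_max (le_of_eq (Real.dist_eq _ _)) (le_of_eq (dist_eq_norm _ _))
  -- integrability of the integrands
  have hI₁ : ∀ t ∈ Icc (0:ℝ) T,
      IntervalIntegrable (fun s => h₁ (x₁ s, x₂ s)) MeasureTheory.volume 0 t := by
    intro t ht
    apply ContinuousOn.intervalIntegrable
    rw [uIcc_of_le ht.1]
    exact (hh₁.continuous.comp_continuousOn (hx₁.prodMk hx₂)).mono (Icc_subset_Icc le_rfl ht.2)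
  have hI₁' : ∀ t ∈ Icc (0:ℝ) T,
      IntervalIntegrable (fun s => h₁ (tx₁ s, tx₂ s)) MeasureTheory.volume 0 t := by
    intro t ht
    apply ContinuousOn.intervalIntegrable
    rw [uIcc_of_le ht.1]
    exact (hh₁.continuous.comp_continuousOn (htx₁.prodMk htx₂)).mono (Icc_subset_Icc le_rfl ht.2)
  have hI₂ : ∀ t ∈ Icc (0:ℝ) T,
      IntervalIntegrable (fun s => h₂ (x₁ s, x₂ s)) MeasureTheory.volume 0 t := by
    intro t ht
    apply ContinuousOn.intervalIntegrable
    rw [uIcc_of_le ht.1]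
    exact (hh₂.continuous.comp_continuousOn (hx₁.prodMk hx₂)).mono (Icc_subset_Icc le_rfl ht.2)
  have hI₂' : ∀ t ∈ Icc (0:ℝ) T,
      IntervalIntegrable (fun s => h₂ (tx₁ s, tx₂ s)) MeasureTheory.volume 0 t := by
    intro t ht
    apply ContinuousOn.intervalIntegrable
    rw [uIcc_of_le ht.1]
    exact (hh₂.continuous.comp_continuousOn (htx₁.prodMk htx₂)).mono (Icc_subset_Icc le_rfl ht.2)
  -- first component estimate
  have E1 : ∀ t ∈ Icc (0:ℝ) T,
      |x₁ t - tx₁ t| ≤ M + (c:ℝ) * ∫ s in (0:ℝ)..t, v s := by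
    intro t ht
    have hdiff : x₁ t - tx₁ t
        = (y₁ t - ty₁ t) + ∫ s in (0:ℝ)..t, (h₁ (x₁ s, x₂ s) - h₁ (tx₁ s, tx₂ s)) := by
      rw [intervalIntegral.integral_sub (hI₁ t ht) (hI₁' t ht), hsol₁ t ht, htsol₁ t ht]
      ring
    have step1 : |∫ s in (0:ℝ)..t, (h₁ (x₁ s, x₂ s) - h₁ (tx₁ s, tx₂ s))|
        ≤ ∫ s in (0:ℝ)..t, |h₁ (x₁ s, x₂ s) - h₁ (tx₁ s, tx₂ s)| :=
      intervalIntegral.abs_integral_le_integral_abs ht.1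
    have step2 : (∫ s in (0:ℝ)..t, |h₁ (x₁ s, x₂ s) - h₁ (tx₁ s, tx₂ s)|)
        ≤ ∫ s in (0:ℝ)..t, (c:ℝ) * v s := by
      apply intervalIntegral.integral_mono_on ht.1 ((hI₁ t ht).sub (hI₁' t ht)).abs
        ((hvint 0 t).const_mul _)
      intro s hs
      exact hb₁ s ⟨hs.1, hs.2.trans ht.2⟩
    have step3 : (∫ s in (0:ℝ)..t, (c:ℝ) * v s) = (c:ℝ) * ∫ s in (0:ℝ)..t, v s :=
      intervalIntegral.integral_const_mul _ _
    have hy : |y₁ t - ty₁ t| ≤ M := le_trans (le_max_left _ _) (hM t ht)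
    calc |x₁ t - tx₁ t|
        ≤ |y₁ t - ty₁ t| + |∫ s in (0:ℝ)..t, (h₁ (x₁ s, x₂ s) - h₁ (tx₁ s, tx₂ s))| := by
          rw [hdiff]; exact abs_add_le _ _
      _ ≤ M + (c:ℝ) * ∫ s in (0:ℝ)..t, v s := by
          rw [← step3]; exact add_le_add hy (step1.trans step2)
  -- integral of v is nonnegative
  have hFnn : ∀ t ∈ Icc (0:ℝ) T, 0 ≤ ∫ s in (0:ℝ)..t, v s := fun t ht =>
    intervalIntegral.integral_nonneg ht.1 fun s _ => hv0 s
  -- second component estimate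
  have E2 : ∀ t ∈ Icc (0:ℝ) T,
      ‖x₂ t - tx₂ t‖ ≤ (1 + (c:ℝ)) * M + ((c:ℝ) + (c:ℝ)^2) * ∫ s in (0:ℝ)..t, v s := by
    intro t ht
    have hdiff : x₂ t - tx₂ t
        = (y₂ t - ty₂ t) + (∫ s in (0:ℝ)..t, (h₂ (x₁ s, x₂ s) - h₂ (tx₁ s, tx₂ s)))
          + (g (x₁ t) - g (tx₁ t)) := by
      rw [intervalIntegral.integral_sub (hI₂ t ht) (hI₂' t ht), hsol₂ t ht, htsol₂ t ht]
      abel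
    have step1 : ‖∫ s in (0:ℝ)..t, (h₂ (x₁ s, x₂ s) - h₂ (tx₁ s, tx₂ s))‖
        ≤ ∫ s in (0:ℝ)..t, ‖h₂ (x₁ s, x₂ s) - h₂ (tx₁ s, tx₂ s)‖ :=
      intervalIntegral.norm_integral_le_integral_norm ht.1
    have step2 : (∫ s in (0:ℝ)..t, ‖h₂ (x₁ s, x₂ s) - h₂ (tx₁ s, tx₂ s)‖)
        ≤ ∫ s in (0:ℝ)..t, (c:ℝ) * v s := by
      apply intervalIntegral.integral_mono_on ht.1 ((hI₂ t ht).sub (hI₂' t ht)).norm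
        ((hvint 0 t).const_mul _)
      intro s hs
      exact hb₂ s ⟨hs.1, hs.2.trans ht.2⟩
    have step3 : (∫ s in (0:ℝ)..t, (c:ℝ) * v s) = (c:ℝ) * ∫ s in (0:ℝ)..t, v s :=
      intervalIntegral.integral_const_mul _ _
    have hy : ‖y₂ t - ty₂ t‖ ≤ M := le_trans (le_max_right _ _) (hM t ht)
    have hgb : ‖g (x₁ t) - g (tx₁ t)‖ ≤ (c:ℝ) * |x₁ t - tx₁ t| := by
      have := hg.dist_le_mul (x₁ t) (tx₁ t)
      rw [dist_eq_norm, Real.dist_eq] at this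
      exact this
    have hgb2 : ‖g (x₁ t) - g (tx₁ t)‖ ≤ (c:ℝ) * (M + (c:ℝ) * ∫ s in (0:ℝ)..t, v s) :=
      hgb.trans (by gcongr; exact E1 t ht)
    calc ‖x₂ t - tx₂ t‖
        ≤ ‖y₂ t - ty₂ t‖ + ‖∫ s in (0:ℝ)..t, (h₂ (x₁ s, x₂ s) - h₂ (tx₁ s, tx₂ s))‖
          + ‖g (x₁ t) - g (tx₁ t)‖ := by rw [hdiff]; exact norm_add₃_le
      _ ≤ M + (c:ℝ) * (∫ s in (0:ℝ)..t, v s)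
          + (c:ℝ) * (M + (c:ℝ) * ∫ s in (0:ℝ)..t, v s) := by
          refine add_le_add (add_le_add hy ?_) hgb2
          rw [← step3]; exact step1.trans step2
      _ = (1 + (c:ℝ)) * M + ((c:ℝ) + (c:ℝ)^2) * ∫ s in (0:ℝ)..t, v s := by ring
  -- the key integral inequality for v
  have key : ∀ t ∈ Icc (0:ℝ) T,
      v t ≤ (1 + (c:ℝ)) * M + ((c:ℝ) + (c:ℝ)^2) * ∫ s in (0:ℝ)..t, v s := by
    intro t ht
    have hvt : v t = max |x₁ t - tx₁ t| ‖x₂ t - tx₂ t‖ := by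
      simp only [hvdef, hπeq t ht]
    rw [hvt]
    refine max_le ?_ (E2 t ht)
    have := E1 t ht
    nlinarith [hFnn t ht, hv0 t]
  -- Grönwall
  set A : ℝ := (1 + (c:ℝ)) * M with hA
  set B : ℝ := (c:ℝ) + (c:ℝ)^2 with hB
  have hA0 : 0 ≤ A := by positivity
  have hB0 : 0 ≤ B := by positivity
  set F : ℝ → ℝ := fun t => ∫ s in (0:ℝ)..t, v s with hFdef
  have hFd : ∀ t : ℝ, HasDerivAt F (v t) t := fun t =>
    intervalIntegral.integral_hasDerivAt_right (hvint 0 t)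
      hvc.aestronglyMeasurable.stronglyMeasurableAtFilter hvc.continuousAt
  have hFc : ContinuousOn F (Icc 0 T) := fun t _ => ((hFd t).continuousAt).continuousWithinAt
  have hgron : ∀ t ∈ Icc (0:ℝ) T, ‖F t‖ ≤ gronwallBound 0 B A (t - 0) := by
    apply norm_le_gronwallBound_of_norm_deriv_right_le hFc
      (fun x _ => (hFd x).hasDerivWithinAt)
    · simp [hFdef, intervalIntegral.integral_same]
    · intro x hx
      have hxI : x ∈ Icc (0:ℝ) T := Ico_subset_Icc_self hx
      have h1 : ‖v x‖ = v x := Real.norm_of_nonneg (hv0 x)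
      have h2 : ‖F x‖ = F x := Real.norm_of_nonneg (hFnn x hxI)
      rw [h1, h2]
      have := key x hxI
      linarith
  intro t ht
  have hvt : max |x₁ t - tx₁ t| ‖x₂ t - tx₂ t‖ = v t := by
    simp only [hvdef, hπeq t ht]
  have hFt : F t ≤ gronwallBound 0 B A t := by
    have := hgron t ht
    rwa [Real.norm_of_nonneg (hFnn t ht), sub_zero] at this
  have hvle : v t ≤ A + B * gronwallBound 0 B A t := by
    have := key t ht
    have h2 : B * F t ≤ B * gronwallBound 0 B A t := mul_le_mul_of_nonneg_left hFt hB0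
    calc v t ≤ A + B * F t := this
      _ ≤ A + B * gronwallBound 0 B A t := by linarith
  rw [hvt]
  refine hvle.trans ?_
  by_cases hBz : B = 0
  · have hcz : (c:ℝ) = 0 := by nlinarith [sq_nonneg (c:ℝ)]
    rw [hBz]
    simp [hA, hcz]
  · rw [gronwallBound_of_K_ne_0 hBz]
    have hexp : A + B * (0 * Real.exp (B * t) + A / B * (Real.exp (B * t) - 1))
        = A * Real.exp (B * t) := by
      field_simp
      ring
    rw [hexp]
    have hle : Real.exp (B * t) ≤ Real.exp (B * T) :=
      Real.exp_le_exp.mpr (by nlinarith [ht.2])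
    calc A * Real.exp (B * t) ≤ A * Real.exp (B * T) :=
        mul_le_mul_of_nonneg_left hle hA0
      _ = (1 + (c:ℝ)) * Real.exp (((c:ℝ) + (c:ℝ)^2) * T) * M := by rw [hA, hB]; ring
end

section
/- Let α ≥ 0, p a K-dimensional probability vector, and R a K×K matrix. For each continuous (u, v) : [0,T] → ℝ × ℝ^K there exists a unique continuous (x, z) : [0,T] → ℝ × ℝ^K satisfying x(t) = u(t) − α∫₀ᵗ (x(s))⁺ ds − eᵀR∫₀ᵗ z(s) ds and z(t) = v(t) − p(x(t))⁻ − (I − p eᵀ)R∫₀ᵗ z(s) ds for all t ∈ [0,T]. -/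
open Set Matrix MeasureTheory intervalIntegral

noncomputable section PhiAux
variable {K : ℕ} {T : ℝ}

def phiExt (hT : (0:ℝ) ≤ T) (f : C(Icc (0:ℝ) T, ℝ × (Fin K → ℝ))) (s : ℝ) :
    ℝ × (Fin K → ℝ) := f (projIcc 0 T hT s)

lemma phiExt_cont (hT : (0:ℝ) ≤ T) (f : C(Icc (0:ℝ) T, ℝ × (Fin K → ℝ))) :
    Continuous (phiExt hT f) := f.continuous.comp continuous_projIcc

def phiIx (hT : (0:ℝ) ≤ T) (f : C(Icc (0:ℝ) T, ℝ × (Fin K → ℝ))) (t : ℝ) : ℝ :=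
  ∫ s in (0:ℝ)..t, max ((phiExt hT f s).1) 0

def phiIz (hT : (0:ℝ) ≤ T) (f : C(Icc (0:ℝ) T, ℝ × (Fin K → ℝ))) (t : ℝ) (j : Fin K) : ℝ :=
  ∫ s in (0:ℝ)..t, (phiExt hT f s).2 j

lemma phiIx_cont (hT : (0:ℝ) ≤ T) (f : C(Icc (0:ℝ) T, ℝ × (Fin K → ℝ))) :
    Continuous (phiIx hT f) :=
  intervalIntegral.continuous_primitive
    (fun a b => ((continuous_fst.comp (phiExt_cont hT f)).max continuous_const).intervalIntegrable a b) 0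

lemma phiIz_cont (hT : (0:ℝ) ≤ T) (f : C(Icc (0:ℝ) T, ℝ × (Fin K → ℝ))) (j : Fin K) :
    Continuous (fun t => phiIz hT f t j) :=
  intervalIntegral.continuous_primitive
    (fun a b => (((continuous_apply j).comp (continuous_snd.comp (phiExt_cont hT f))).intervalIntegrable a b)) 0

def phiA (hT : (0:ℝ) ≤ T) (α : ℝ) (R : Matrix (Fin K) (Fin K) ℝ)
    (u' : C(Icc (0:ℝ) T, ℝ)) (f : C(Icc (0:ℝ) T, ℝ × (Fin K → ℝ))) (t : Icc (0:ℝ) T) : ℝ :=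
  u' t - α * phiIx hT f t - ∑ i, ∑ j, R i j * phiIz hT f t j

lemma phiA_cont (hT : (0:ℝ) ≤ T) (α : ℝ) (R : Matrix (Fin K) (Fin K) ℝ)
    (u' : C(Icc (0:ℝ) T, ℝ)) (f : C(Icc (0:ℝ) T, ℝ × (Fin K → ℝ))) :
    Continuous (phiA hT α R u' f) := by
  refine (u'.continuous.sub (continuous_const.mul ((phiIx_cont hT f).comp continuous_subtype_val))).sub ?_
  exact continuous_finset_sum _ fun i _ => continuous_finset_sum _ fun j _ =>
    continuous_const.mul ((phiIz_cont hT f j).comp continuous_subtype_val)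

def phiF (hT : (0:ℝ) ≤ T) (α : ℝ) (p : Fin K → ℝ) (R M : Matrix (Fin K) (Fin K) ℝ)
    (u' : C(Icc (0:ℝ) T, ℝ)) (v' : C(Icc (0:ℝ) T, Fin K → ℝ))
    (f : C(Icc (0:ℝ) T, ℝ × (Fin K → ℝ))) : C(Icc (0:ℝ) T, ℝ × (Fin K → ℝ)) :=
  ⟨fun t => (phiA hT α R u' f t,
      fun k => v' t k - p k * max (-(phiA hT α R u' f t)) 0 - ∑ j, M k j * phiIz hT f t j), by
    refine (phiA_cont hT α R u' f).prodMk (continuous_pi fun k => ?_)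
    refine (((continuous_apply k).comp v'.continuous).sub
      (continuous_const.mul (((phiA_cont hT α R u' f).neg).max continuous_const))).sub ?_
    exact continuous_finset_sum _ fun j _ =>
      continuous_const.mul ((phiIz_cont hT f j).comp continuous_subtype_val)⟩

variable (hT : (0:ℝ) ≤ T) {α : ℝ} {p : Fin K → ℝ} (R M : Matrix (Fin K) (Fin K) ℝ)
  (u' : C(Icc (0:ℝ) T, ℝ)) (v' : C(Icc (0:ℝ) T, Fin K → ℝ))
  (f g : C(Icc (0:ℝ) T, ℝ × (Fin K → ℝ)))

lemma phiKey (hα : 0 ≤ α) (hp0 : ∀ k, 0 ≤ p k) (hp1 : ∀ k, p k ≤ 1) (t : Icc (0:ℝ) T) :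
    ‖phiF hT α p R M u' v' f t - phiF hT α p R M u' v' g t‖ ≤
      (α + (∑ i, ∑ j, |R i j|) + ∑ k, ∑ j, |M k j|) *
        ∫ s in (0:ℝ)..(t:ℝ), ‖phiExt hT f s - phiExt hT g s‖ := by
  set SR := ∑ i, ∑ j, |R i j| with hSR
  set SM := ∑ k, ∑ j, |M k j| with hSM
  set J := ∫ s in (0:ℝ)..(t:ℝ), ‖phiExt hT f s - phiExt hT g s‖ with hJ
  have hDc : Continuous fun s => ‖phiExt hT f s - phiExt hT g s‖ :=
    ((phiExt_cont hT f).sub (phiExt_cont hT g)).norm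
  have ht0 : (0:ℝ) ≤ (t:ℝ) := t.2.1
  have hJ0 : 0 ≤ J :=
    intervalIntegral.integral_nonneg ht0 fun s _ => norm_nonneg _
  have hSR0 : 0 ≤ SR := Finset.sum_nonneg fun i _ => Finset.sum_nonneg fun j _ => abs_nonneg _
  have hSM0 : 0 ≤ SM := Finset.sum_nonneg fun i _ => Finset.sum_nonneg fun j _ => abs_nonneg _
  -- bound on Ix difference
  have hIx : |phiIx hT f t - phiIx hT g t| ≤ J := by
    have hcf : Continuous fun s => max ((phiExt hT f s).1) 0 :=
      ((phiExt_cont hT f).fst).max continuous_const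
    have hcg : Continuous fun s => max ((phiExt hT g s).1) 0 :=
      ((phiExt_cont hT g).fst).max continuous_const
    rw [phiIx, phiIx, ← intervalIntegral.integral_sub
      (hcf.intervalIntegrable _ _) (hcg.intervalIntegrable _ _)]
    calc |∫ s in (0:ℝ)..(t:ℝ), (max ((phiExt hT f s).1) 0 - max ((phiExt hT g s).1) 0)|
        ≤ ∫ s in (0:ℝ)..(t:ℝ), |max ((phiExt hT f s).1) 0 - max ((phiExt hT g s).1) 0| := by
          simpa [Real.norm_eq_abs] using
            intervalIntegral.norm_integral_le_integral_norm (μ := volume)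
              (f := fun s => max ((phiExt hT f s).1) 0 - max ((phiExt hT g s).1) 0) ht0
      _ ≤ J := by
          refine intervalIntegral.integral_mono_on ht0 ?_ (hDc.intervalIntegrable _ _) ?_
          · exact (((continuous_fst.comp (phiExt_cont hT f)).max continuous_const).sub
              ((continuous_fst.comp (phiExt_cont hT g)).max continuous_const)).abs.intervalIntegrable _ _
          · intro s _
            refine (abs_max_sub_max_le_abs _ _ _).trans ?_
            simpa [Prod.fst_sub, Real.norm_eq_abs] using
              norm_fst_le (phiExt hT f s - phiExt hT g s)
  -- bound on Iz difference
  have hIz : ∀ j, |phiIz hT f t j - phiIz hT g t j| ≤ J := by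
    intro j
    have hcf : Continuous fun s => (phiExt hT f s).2 j :=
      (continuous_pi_iff.1 (phiExt_cont hT f).snd) j
    have hcg : Continuous fun s => (phiExt hT g s).2 j :=
      (continuous_pi_iff.1 (phiExt_cont hT g).snd) j
    rw [phiIz, phiIz, ← intervalIntegral.integral_sub
      (hcf.intervalIntegrable _ _) (hcg.intervalIntegrable _ _)]
    calc |∫ s in (0:ℝ)..(t:ℝ), ((phiExt hT f s).2 j - (phiExt hT g s).2 j)|
        ≤ ∫ s in (0:ℝ)..(t:ℝ), |(phiExt hT f s).2 j - (phiExt hT g s).2 j| := by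
          simpa [Real.norm_eq_abs] using
            intervalIntegral.norm_integral_le_integral_norm (μ := volume)
              (f := fun s => (phiExt hT f s).2 j - (phiExt hT g s).2 j) ht0
      _ ≤ J := by
          refine intervalIntegral.integral_mono_on ht0 ?_ (hDc.intervalIntegrable _ _) ?_
          · exact (((continuous_apply j).comp (continuous_snd.comp (phiExt_cont hT f))).sub
              ((continuous_apply j).comp (continuous_snd.comp (phiExt_cont hT g)))).abs.intervalIntegrable _ _
          · intro s _
            have h1 := norm_le_pi_norm ((phiExt hT f s - phiExt hT g s).2) j
            have h2 := norm_snd_le (phiExt hT f s - phiExt hT g s)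
            simp only [Prod.snd_sub, Pi.sub_apply, Real.norm_eq_abs] at h1
            exact h1.trans (by simpa using h2)
  -- bound on A difference
  have hAe : phiA hT α R u' f t - phiA hT α R u' g t
      = α * (phiIx hT g t - phiIx hT f t)
        + ∑ i, ∑ j, R i j * (phiIz hT g t j - phiIz hT f t j) := by
    simp only [phiA, mul_sub, Finset.sum_sub_distrib]
    ring
  have hA : |phiA hT α R u' f t - phiA hT α R u' g t| ≤ (α + SR) * J := by
    rw [hAe]
    have h1 : |α * (phiIx hT g t - phiIx hT f t)| ≤ α * J := by
      rw [abs_mul, abs_of_nonneg hα]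
      exact mul_le_mul_of_nonneg_left (by rw [abs_sub_comm]; exact hIx) hα
    have h2 : |∑ i, ∑ j, R i j * (phiIz hT g t j - phiIz hT f t j)| ≤ SR * J := by
      calc |∑ i, ∑ j, R i j * (phiIz hT g t j - phiIz hT f t j)|
          ≤ ∑ i, ∑ j, |R i j| * J := by
            refine (Finset.abs_sum_le_sum_abs _ _).trans (Finset.sum_le_sum fun i _ => ?_)
            refine (Finset.abs_sum_le_sum_abs _ _).trans (Finset.sum_le_sum fun j _ => ?_)
            rw [abs_mul]
            exact mul_le_mul_of_nonneg_left (by rw [abs_sub_comm]; exact hIz j) (abs_nonneg _)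
        _ = SR * J := by rw [hSR]; simp [Finset.sum_mul]
    calc |α * (phiIx hT g t - phiIx hT f t)
          + ∑ i, ∑ j, R i j * (phiIz hT g t j - phiIz hT f t j)|
        ≤ α * J + SR * J := (abs_add_le _ _).trans (add_le_add h1 h2)
      _ = (α + SR) * J := by ring
  -- final bound
  clear_value J
  have hC0 : 0 ≤ α + SR + SM := by positivity
  have hsnd : ∀ k, |(v' t k - p k * max (-(phiA hT α R u' f t)) 0 - ∑ j, M k j * phiIz hT f t j)
      - (v' t k - p k * max (-(phiA hT α R u' g t)) 0 - ∑ j, M k j * phiIz hT g t j)|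
      ≤ (α + SR + SM) * J := by
    intro k
    have hBk : (v' t k - p k * max (-(phiA hT α R u' f t)) 0 - ∑ j, M k j * phiIz hT f t j)
        - (v' t k - p k * max (-(phiA hT α R u' g t)) 0 - ∑ j, M k j * phiIz hT g t j)
        = p k * (max (-(phiA hT α R u' g t)) 0 - max (-(phiA hT α R u' f t)) 0)
          + ∑ j, M k j * (phiIz hT g t j - phiIz hT f t j) := by
      simp only [mul_sub, Finset.sum_sub_distrib]
      ring
    rw [hBk]
    have h1 : |p k * (max (-(phiA hT α R u' g t)) 0 - max (-(phiA hT α R u' f t)) 0)|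
        ≤ (α + SR) * J := by
      rw [abs_mul, abs_of_nonneg (hp0 k)]
      have hm : |max (-(phiA hT α R u' g t)) 0 - max (-(phiA hT α R u' f t)) 0|
          ≤ |phiA hT α R u' f t - phiA hT α R u' g t| := by
        refine (abs_max_sub_max_le_abs _ _ _).trans ?_
        rw [neg_sub_neg]
      calc p k * |max (-(phiA hT α R u' g t)) 0 - max (-(phiA hT α R u' f t)) 0|
          ≤ 1 * |phiA hT α R u' f t - phiA hT α R u' g t| :=
            mul_le_mul (hp1 k) hm (abs_nonneg _) one_pos.le
        _ ≤ (α + SR) * J := by rw [one_mul]; exact hA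
    have h2 : |∑ j, M k j * (phiIz hT g t j - phiIz hT f t j)| ≤ SM * J := by
      calc |∑ j, M k j * (phiIz hT g t j - phiIz hT f t j)|
          ≤ ∑ j, |M k j| * J := by
            refine (Finset.abs_sum_le_sum_abs _ _).trans (Finset.sum_le_sum fun j _ => ?_)
            rw [abs_mul]
            exact mul_le_mul_of_nonneg_left (by rw [abs_sub_comm]; exact hIz j) (abs_nonneg _)
        _ = (∑ j, |M k j|) * J := by rw [Finset.sum_mul]
        _ ≤ SM * J := by
            refine mul_le_mul_of_nonneg_right ?_ hJ0
            exact Finset.single_le_sum (f := fun k => ∑ j, |M k j|)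
              (fun i _ => Finset.sum_nonneg fun j _ => abs_nonneg _) (Finset.mem_univ k)
    calc |p k * (max (-(phiA hT α R u' g t)) 0 - max (-(phiA hT α R u' f t)) 0)
          + ∑ j, M k j * (phiIz hT g t j - phiIz hT f t j)|
        ≤ (α + SR) * J + SM * J := (abs_add_le _ _).trans (add_le_add h1 h2)
      _ = (α + SR + SM) * J := by ring
  have hsub : phiF hT α p R M u' v' f t - phiF hT α p R M u' v' g t
      = (phiA hT α R u' f t - phiA hT α R u' g t,
         fun k => (v' t k - p k * max (-(phiA hT α R u' f t)) 0 - ∑ j, M k j * phiIz hT f t j)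
           - (v' t k - p k * max (-(phiA hT α R u' g t)) 0 - ∑ j, M k j * phiIz hT g t j)) := rfl
  calc ‖phiF hT α p R M u' v' f t - phiF hT α p R M u' v' g t‖
      = max ‖phiA hT α R u' f t - phiA hT α R u' g t‖
          ‖(fun k => (v' t k - p k * max (-(phiA hT α R u' f t)) 0 - ∑ j, M k j * phiIz hT f t j)
           - (v' t k - p k * max (-(phiA hT α R u' g t)) 0 - ∑ j, M k j * phiIz hT g t j) : Fin K → ℝ)‖ := by
        rw [hsub]; exact Prod.norm_def _
    _ ≤ (α + SR + SM) * J := by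
        refine max_le ?_ ?_
        · rw [Real.norm_eq_abs]
          refine hA.trans ?_
          nlinarith [mul_nonneg hSM0 hJ0]
        · refine (pi_norm_le_iff_of_nonneg (mul_nonneg hC0 hJ0)).2 fun k => ?_
          rw [Real.norm_eq_abs]
          exact hsnd k

lemma phiIter (hα : 0 ≤ α) (hp0 : ∀ k, 0 ≤ p k) (hp1 : ∀ k, p k ≤ 1) (n : ℕ)
    (t : Icc (0:ℝ) T) :
    ‖((phiF hT α p R M u' v')^[n] f) t - ((phiF hT α p R M u' v')^[n] g) t‖ ≤
      (α + (∑ i, ∑ j, |R i j|) + ∑ k, ∑ j, |M k j|) ^ n * (t:ℝ) ^ n / n.factorial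
        * ‖f - g‖ := by
  set C := α + (∑ i, ∑ j, |R i j|) + ∑ k, ∑ j, |M k j| with hC
  have hC0 : 0 ≤ C := by
    rw [hC]
    have h1 : (0:ℝ) ≤ ∑ i, ∑ j, |R i j| :=
      Finset.sum_nonneg fun i _ => Finset.sum_nonneg fun j _ => abs_nonneg _
    have h2 : (0:ℝ) ≤ ∑ k, ∑ j, |M k j| :=
      Finset.sum_nonneg fun i _ => Finset.sum_nonneg fun j _ => abs_nonneg _
    linarith
  clear_value C
  induction n generalizing t with
  | zero =>
      simpa [ContinuousMap.sub_apply] using ContinuousMap.norm_coe_le_norm (f - g) t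
  | succ n IH =>
      rw [Function.iterate_succ_apply', Function.iterate_succ_apply']
      refine (phiKey hT R M u' v' ((phiF hT α p R M u' v')^[n] f)
        ((phiF hT α p R M u' v')^[n] g) hα hp0 hp1 t).trans ?_
      rw [← hC]
      have ht0 : (0:ℝ) ≤ (t:ℝ) := t.2.1
      set F := phiF hT α p R M u' v' with hF
      have hcont : Continuous fun s => ‖phiExt hT (F^[n] f) s - phiExt hT (F^[n] g) s‖ :=
        ((phiExt_cont hT _).sub (phiExt_cont hT _)).norm
      have hmono : (∫ s in (0:ℝ)..(t:ℝ), ‖phiExt hT (F^[n] f) s - phiExt hT (F^[n] g) s‖)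
          ≤ ∫ s in (0:ℝ)..(t:ℝ), (C ^ n / n.factorial * ‖f - g‖) * s ^ n := by
        refine intervalIntegral.integral_mono_on ht0 (hcont.intervalIntegrable _ _)
          ((continuous_const.mul (continuous_pow n)).intervalIntegrable _ _) fun s hs => ?_
        have hsT : s ∈ Icc (0:ℝ) T := ⟨hs.1, hs.2.trans t.2.2⟩
        have h := IH (projIcc 0 T hT s)
        have hps : ((projIcc 0 T hT s : Icc (0:ℝ) T) : ℝ) = s := by
          rw [projIcc_of_mem hT hsT]
        rw [hps] at h
        calc ‖phiExt hT (F^[n] f) s - phiExt hT (F^[n] g) s‖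
            ≤ C ^ n * s ^ n / n.factorial * ‖f - g‖ := h
          _ = (C ^ n / n.factorial * ‖f - g‖) * s ^ n := by ring
      refine (mul_le_mul_of_nonneg_left hmono hC0).trans ?_
      rw [intervalIntegral.integral_const_mul, integral_pow]
      have hfac : ((n+1).factorial : ℝ) = (n+1) * n.factorial := by
        rw [Nat.factorial_succ]; push_cast; ring
      have hnfac : (n.factorial : ℝ) ≠ 0 := Nat.cast_ne_zero.2 n.factorial_ne_zero
      have hn1 : ((n:ℝ) + 1) ≠ 0 := by positivity
      rw [hfac]
      field_simp
      ring_nf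
      exact le_rfl
lemma phiFixed (hα : 0 ≤ α) (hp0 : ∀ k, 0 ≤ p k) (hp1 : ∀ k, p k ≤ 1) :
    ∃! φ : C(Icc (0:ℝ) T, ℝ × (Fin K → ℝ)), phiF hT α p R M u' v' φ = φ := by
  set C := α + (∑ i, ∑ j, |R i j|) + ∑ k, ∑ j, |M k j| with hC
  have hC0 : 0 ≤ C := by
    have h1 : (0:ℝ) ≤ ∑ i, ∑ j, |R i j| :=
      Finset.sum_nonneg fun i _ => Finset.sum_nonneg fun j _ => abs_nonneg _
    have h2 : (0:ℝ) ≤ ∑ k, ∑ j, |M k j| :=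
      Finset.sum_nonneg fun i _ => Finset.sum_nonneg fun j _ => abs_nonneg _
    rw [hC]; linarith
  obtain ⟨n, hn⟩ : ∃ n : ℕ, (C * T) ^ n / n.factorial < 1 :=
    ((FloorSemiring.tendsto_pow_div_factorial_atTop (C * T)).eventually_lt_const
     (by norm_num : (0:ℝ) < 1)).exists
  haveI : Nonempty (C(Icc (0:ℝ) T, ℝ × (Fin K → ℝ))) := ⟨⟨fun _ => 0, continuous_const⟩⟩
  have hKc0 : 0 ≤ (C * T) ^ n / n.factorial :=
    div_nonneg (pow_nonneg (mul_nonneg hC0 hT) n) (Nat.cast_nonneg _)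
  set Kc : NNReal := ⟨(C * T) ^ n / n.factorial, hKc0⟩ with hKc
  set F := phiF hT α p R M u' v' with hF
  have hL : LipschitzWith Kc (F^[n]) := by
    refine LipschitzWith.of_dist_le_mul fun f g => ?_
    refine (ContinuousMap.dist_le (mul_nonneg hKc0 dist_nonneg)).2 fun t => ?_
    rw [dist_eq_norm, dist_eq_norm]
    refine (phiIter hT R M u' v' f g hα hp0 hp1 n t).trans ?_
    rw [← hC]
    have htn : ((t:ℝ)) ^ n ≤ T ^ n := pow_le_pow_left₀ t.2.1 t.2.2 n
    have : C ^ n * (t:ℝ) ^ n / n.factorial ≤ (C * T) ^ n / n.factorial := by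
      rw [mul_pow]
      refine div_le_div_of_nonneg_right ?_ ?_ |>.trans le_rfl
      · exact mul_le_mul_of_nonneg_left htn (pow_nonneg hC0 n)
      · exact Nat.cast_nonneg _
    calc C ^ n * (t:ℝ) ^ n / n.factorial * ‖f - g‖
        ≤ (C * T) ^ n / n.factorial * ‖f - g‖ :=
          mul_le_mul_of_nonneg_right this (norm_nonneg _)
      _ = Kc * ‖f - g‖ := rfl
  have hCW : ContractingWith Kc (F^[n]) := by
    refine ⟨?_, hL⟩
    rw [← NNReal.coe_lt_coe]
    exact hn
  refine ⟨hCW.fixedPoint (F^[n]), ?_, ?_⟩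
  · have hfixn : F^[n] (hCW.fixedPoint (F^[n])) = hCW.fixedPoint (F^[n]) :=
      hCW.fixedPoint_isFixedPt
    have h1 : Function.IsFixedPt (F^[n]) (F (hCW.fixedPoint (F^[n]))) := by
      show F^[n] (F _) = F _
      rw [← Function.iterate_succ_apply, Function.iterate_succ_apply', hfixn]
    exact hCW.fixedPoint_unique h1
  · intro ψ hψ
    exact hCW.fixedPoint_unique (Function.IsFixedPt.iterate hψ n)
end PhiAux

/-- existence and uniqueness of continuous solutions of the system
`x(t) = u(t) − α∫₀ᵗ x(s)⁺ ds − eᵀR∫₀ᵗ z(s) ds`,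
`z(t) = v(t) − p x(t)⁻ − (I − p eᵀ)R ∫₀ᵗ z(s) ds` on `[0, T]`. -/
theorem exists_unique_Phi_solution {K : ℕ} (hK : 1 ≤ K) (T : ℝ) (hT : 0 < T)
    (α : ℝ) (hα : 0 ≤ α) (p : Fin K → ℝ) (hp : ∀ k, 0 ≤ p k) (hpsum : ∑ k, p k = 1)
    (R : Matrix (Fin K) (Fin K) ℝ)
    (u : ℝ → ℝ) (v : ℝ → Fin K → ℝ)
    (hu : ContinuousOn u (Icc 0 T)) (hv : ContinuousOn v (Icc 0 T)) :
    ∃ x : ℝ → ℝ, ∃ z : ℝ → Fin K → ℝ,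
      ContinuousOn x (Icc 0 T) ∧ ContinuousOn z (Icc 0 T) ∧
      (∀ t ∈ Icc (0:ℝ) T,
        x t = u t - α * (∫ s in (0:ℝ)..t, max (x s) 0)
          - ∑ i, (R *ᵥ fun j => ∫ s in (0:ℝ)..t, z s j) i) ∧
      (∀ t ∈ Icc (0:ℝ) T, ∀ k,
        z t k = v t k - p k * max (-(x t)) 0
          - (((1 - Matrix.of fun i _ => p i) * R) *ᵥ fun j => ∫ s in (0:ℝ)..t, z s j) k) ∧
      (∀ x' : ℝ → ℝ, ∀ z' : ℝ → Fin K → ℝ,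
        ContinuousOn x' (Icc 0 T) → ContinuousOn z' (Icc 0 T) →
        (∀ t ∈ Icc (0:ℝ) T,
          x' t = u t - α * (∫ s in (0:ℝ)..t, max (x' s) 0)
            - ∑ i, (R *ᵥ fun j => ∫ s in (0:ℝ)..t, z' s j) i) →
        (∀ t ∈ Icc (0:ℝ) T, ∀ k,
          z' t k = v t k - p k * max (-(x' t)) 0
            - (((1 - Matrix.of fun i _ => p i) * R) *ᵥ fun j => ∫ s in (0:ℝ)..t, z' s j) k) →
        ∀ t ∈ Icc (0:ℝ) T, x' t = x t ∧ z' t = z t) := by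
  have hT' : (0:ℝ) ≤ T := hT.le
  set M : Matrix (Fin K) (Fin K) ℝ := (1 - Matrix.of fun i _ => p i) * R with hM
  have hp1 : ∀ k, p k ≤ 1 := fun k =>
    hpsum ▸ Finset.single_le_sum (fun i _ => hp i) (Finset.mem_univ k)
  set u' : C(Icc (0:ℝ) T, ℝ) := ⟨(Icc (0:ℝ) T).restrict u, hu.restrict⟩ with hu'
  set v' : C(Icc (0:ℝ) T, Fin K → ℝ) := ⟨(Icc (0:ℝ) T).restrict v, hv.restrict⟩ with hv'
  obtain ⟨φ, hφ, huniq⟩ := phiFixed hT' R M u' v' hα hp hp1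
  refine ⟨fun t => (φ (projIcc 0 T hT' t)).1, fun t => (φ (projIcc 0 T hT' t)).2,
    ((phiExt_cont hT' φ).fst).continuousOn, ((phiExt_cont hT' φ).snd).continuousOn,
    ?_, ?_, ?_⟩
  · -- first equation
    intro t ht
    have hpr : projIcc 0 T hT' t = ⟨t, ht⟩ := projIcc_of_mem hT' ht
    have h1 : (φ ⟨t, ht⟩).1 = phiA hT' α R u' φ ⟨t, ht⟩ := by
      conv_lhs => rw [← hφ]
      rfl
    beta_reduce
    rw [hpr, h1, phiA]
    simp only [Matrix.mulVec, dotProduct, phiIx, phiIz, phiExt, hu']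
    rfl
  · -- second equation
    intro t ht k
    have hpr : projIcc 0 T hT' t = ⟨t, ht⟩ := projIcc_of_mem hT' ht
    have h2 : (φ ⟨t, ht⟩).2 k = v' ⟨t, ht⟩ k
        - p k * max (-(phiA hT' α R u' φ ⟨t, ht⟩)) 0
        - ∑ j, M k j * phiIz hT' φ t j := by
      conv_lhs => rw [← hφ]
      rfl
    have h1 : (φ ⟨t, ht⟩).1 = phiA hT' α R u' φ ⟨t, ht⟩ := by
      conv_lhs => rw [← hφ]
      rfl
    beta_reduce
    rw [hpr, h2, ← h1]
    simp only [Matrix.mulVec, dotProduct, phiIz, phiExt, hv', ← hM]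
    rfl
  · -- uniqueness
    intro x' z' hx' hz' he1 he2 t ht
    set f' : C(Icc (0:ℝ) T, ℝ × (Fin K → ℝ)) :=
      ⟨fun t' => (x' t', z' t'), (hx'.restrict).prodMk (hz'.restrict)⟩ with hf'
    have hIzf : ∀ (t' : Icc (0:ℝ) T) j,
        phiIz hT' f' t' j = ∫ s in (0:ℝ)..(t':ℝ), z' s j := by
      intro t' j
      refine intervalIntegral.integral_congr ?_
      rw [uIcc_of_le t'.2.1]
      intro s hs
      have hsT : s ∈ Icc (0:ℝ) T := ⟨hs.1, hs.2.trans t'.2.2⟩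
      show (f' (projIcc 0 T hT' s)).2 j = z' s j
      rw [projIcc_of_mem hT' hsT]
      rfl
    have hIxf : ∀ (t' : Icc (0:ℝ) T),
        phiIx hT' f' t' = ∫ s in (0:ℝ)..(t':ℝ), max (x' s) 0 := by
      intro t'
      refine intervalIntegral.integral_congr ?_
      rw [uIcc_of_le t'.2.1]
      intro s hs
      have hsT : s ∈ Icc (0:ℝ) T := ⟨hs.1, hs.2.trans t'.2.2⟩
      show max ((f' (projIcc 0 T hT' s)).1) 0 = max (x' s) 0
      rw [projIcc_of_mem hT' hsT]
      rfl
    have hAf : ∀ t' : Icc (0:ℝ) T, phiA hT' α R u' f' t' = x' t' := by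
      intro t'
      rw [phiA, hIxf t']
      have := he1 t' t'.2
      rw [this]
      simp only [Matrix.mulVec, dotProduct, hu']
      congr 1
      refine Finset.sum_congr rfl fun i _ => Finset.sum_congr rfl fun j _ => ?_
      rw [hIzf t' j]
    have hFf' : phiF hT' α p R M u' v' f' = f' := by
      refine ContinuousMap.ext fun t' => Prod.ext ?_ ?_
      · exact hAf t'
      · funext k
        show v' t' k - p k * max (-(phiA hT' α R u' f' t')) 0
            - ∑ j, M k j * phiIz hT' f' t' j = z' t' k
        rw [hAf t', he2 t' t'.2 k]
        simp only [Matrix.mulVec, dotProduct, hv', ← hM]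
        congr 1
        refine Finset.sum_congr rfl fun j _ => ?_
        rw [hIzf t' j]
    have hfφ : f' = φ := huniq f' hFf'
    have hpr : projIcc 0 T hT' t = ⟨t, ht⟩ := projIcc_of_mem hT' ht
    constructor
    · show x' t = (φ (projIcc 0 T hT' t)).1
      rw [hpr, ← hfφ]
      rfl
    · show z' t = (φ (projIcc 0 T hT' t)).2
      rw [hpr, ← hfφ]
      rfl
end
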